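/- Let Γ be a locally compact Hausdorff topological space equipped with a continuous action of a compact Lie group G, let φ be a G-equivariant flow on Γ, let S ⊆ Γ be a G-invariant isolated invariant set, and let (A,R) be an attractor-repeller pair in S with A and R both G-invariant. Then there exists an index triple (L,M,N) for (A,R) in which L, M and N are all G-invariant: compact G-invariant sets N ⊆ M ⊆ L such that (L,M) is an index pair for R, (L,N) is an index pair for S, and (M,N) is an index pair for A. -/

import Mathlib

open Set

/-- A (continuous) flow on a topological space `Γ`. -/
def IsFlow {Γ : Type*} [TopologicalSpace Γ] (φ : Γ × ℝ → Γ) : Prop :=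
  Continuous φ ∧ (∀ x, φ (x, 0) = x) ∧ ∀ (x : Γ) (s t : ℝ), φ (φ (x, s), t) = φ (x, s + t)

/-- The maximal invariant subset of `U`. -/
def maxInv {Γ : Type*} (φ : Γ × ℝ → Γ) (U : Set Γ) : Set Γ :=
  {u | u ∈ U ∧ ∀ t : ℝ, φ (u, t) ∈ U}

/-- `U` is a compact (isolating) neighbourhood of `S` with `Inv U = S`. -/
def IsIsolatingNbhd {Γ : Type*} [TopologicalSpace Γ] (φ : Γ × ℝ → Γ) (U S : Set Γ) : Prop :=
  IsCompact U ∧ U ∈ nhdsSet S ∧ maxInv φ U = S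

/-- `S` is an isolated invariant set of the flow `φ`. -/
def IsIsolatedInvariantSet {Γ : Type*} [TopologicalSpace Γ] (φ : Γ × ℝ → Γ) (S : Set Γ) : Prop :=
  IsCompact S ∧ ∃ U : Set Γ, IsIsolatingNbhd φ U S

/-- `(M, N)` is an index pair for the isolated invariant set `S`. -/
def IsIndexPair {Γ : Type*} [TopologicalSpace Γ] (φ : Γ × ℝ → Γ) (S M N : Set Γ) : Prop :=
  IsCompact M ∧ IsCompact N ∧ N ⊆ M ∧
  IsIsolatingNbhd φ (closure (M \ N)) S ∧
  (∀ x ∈ N, ∀ t : ℝ, 0 ≤ t →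
    (∀ s ∈ Icc (0 : ℝ) t, φ (x, s) ∈ M) → ∀ s ∈ Icc (0 : ℝ) t, φ (x, s) ∈ N) ∧
  (∀ x ∈ M, ∀ t : ℝ, 0 ≤ t → φ (x, t) ∉ M → ∃ s ∈ Icc (0 : ℝ) t, φ (x, s) ∈ N)

/-- The ω-limit `ω(T)`: the maximal invariant set of the closure of the forward orbit of `T`. -/
def omegaSet {Γ : Type*} [TopologicalSpace Γ] (φ : Γ × ℝ → Γ) (T : Set Γ) : Set Γ :=
  maxInv φ (closure (φ '' (T ×ˢ Ici (0 : ℝ))))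

/-- The ω*-limit `ω*(T)`: the maximal invariant set of the closure of the backward orbit of `T`. -/
def omegaStarSet {Γ : Type*} [TopologicalSpace Γ] (φ : Γ × ℝ → Γ) (T : Set Γ) : Set Γ :=
  maxInv φ (closure (φ '' (T ×ˢ Iic (0 : ℝ))))

/-- `A` is an attractor in the isolated invariant set `S`: there is a neighbourhood `U` of `A`
in the subspace `S` with `A = ω(U)`. -/
def IsAttractorIn {Γ : Type*} [TopologicalSpace Γ] (φ : Γ × ℝ → Γ) (S A : Set Γ) : Prop :=
  A ⊆ S ∧ ∃ U : Set Γ, U ⊆ S ∧ (∃ V : Set Γ, IsOpen V ∧ A ⊆ V ∧ V ∩ S ⊆ U) ∧ omegaSet φ U = A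

/-- `R` is a repeller in the isolated invariant set `S`: there is a neighbourhood `U` of `R`
in the subspace `S` with `R = ω*(U)`. -/
def IsRepellerIn {Γ : Type*} [TopologicalSpace Γ] (φ : Γ × ℝ → Γ) (S R : Set Γ) : Prop :=
  R ⊆ S ∧ ∃ U : Set Γ, U ⊆ S ∧ (∃ V : Set Γ, IsOpen V ∧ R ⊆ V ∧ V ∩ S ⊆ U) ∧ omegaStarSet φ U = R

/-- The complementary repeller `A* = {x ∈ S | ω({x}) ∩ A = ∅}` of an attractor `A ⊆ S`. -/
def compRepeller {Γ : Type*} [TopologicalSpace Γ] (φ : Γ × ℝ → Γ) (S A : Set Γ) : Set Γ :=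
  {x ∈ S | omegaSet φ {x} ∩ A = ∅}

/-- The complementary attractor `R* = {x ∈ S | ω*({x}) ∩ R = ∅}` of a repeller `R ⊆ S`. -/
def compAttractor {Γ : Type*} [TopologicalSpace Γ] (φ : Γ × ℝ → Γ) (S R : Set Γ) : Set Γ :=
  {x ∈ S | omegaStarSet φ {x} ∩ R = ∅}

/-- `(A, R)` is an attractor-repeller pair in `S`. -/
def IsAttractorRepellerPair {Γ : Type*} [TopologicalSpace Γ] (φ : Γ × ℝ → Γ)
    (S A R : Set Γ) : Prop :=
  IsAttractorIn φ S A ∧ IsRepellerIn φ S R ∧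
    A = compAttractor φ S R ∧ R = compRepeller φ S A

namespace IndexTripleAux

open Set Filter Topology

set_option linter.unusedSectionVars false
set_option linter.unusedVariables false

variable {Γ : Type*} [TopologicalSpace Γ]

section FlowBasics

variable {φ : Γ × ℝ → Γ} {U V K : Set Γ}

theorem fcont (h : IsFlow φ) (t : ℝ) : Continuous fun x => φ (x, t) :=
  h.1.comp (continuous_id.prodMk continuous_const)

theorem fzero (h : IsFlow φ) (x : Γ) : φ (x, 0) = x := h.2.1 x

theorem fadd (h : IsFlow φ) (x : Γ) (s t : ℝ) : φ (φ (x, s), t) = φ (x, s + t) := h.2.2 x s t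

/-- the time-reversed flow -/
def rev (φ : Γ × ℝ → Γ) : Γ × ℝ → Γ := fun p => φ (p.1, -p.2)

theorem rev_isFlow (h : IsFlow φ) : IsFlow (rev φ) := by
  refine ⟨h.1.comp (continuous_fst.prodMk continuous_snd.neg), fun x => by
    simp [rev, fzero h], fun x s t => by
      simp only [rev, fadd h]; ring_nf⟩

theorem rev_apply (x : Γ) (t : ℝ) : rev φ (x, t) = φ (x, -t) := rfl

/-- forward confinement of the time segment `[0,t]` inside `U` -/
def Conf (φ : Γ × ℝ → Γ) (U : Set Γ) (x : Γ) (t : ℝ) : Prop :=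
  ∀ s ∈ Icc (0:ℝ) t, φ (x, s) ∈ U

theorem conf_zero (h : IsFlow φ) (hx : x ∈ U) : Conf φ U x 0 := by
  intro s hs
  have : s = 0 := le_antisymm hs.2 hs.1
  rw [this, fzero h]; exact hx

theorem conf_end (hc : Conf φ U x t) (ht : 0 ≤ t) : φ (x, t) ∈ U :=
  hc t ⟨ht, le_refl t⟩

theorem conf_start (h : IsFlow φ) (hc : Conf φ U x t) (ht : 0 ≤ t) : x ∈ U := by
  have := hc 0 ⟨le_refl 0, ht⟩; rwa [fzero h] at this

theorem conf_prefix (hc : Conf φ U x t) {s : ℝ} (hs : s ≤ t) : Conf φ U x s :=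
  fun u hu => hc u ⟨hu.1, hu.2.trans hs⟩

theorem conf_shift (h : IsFlow φ) (hc : Conf φ U x t) {s : ℝ} (hs : s ∈ Icc (0:ℝ) t) :
    Conf φ U (φ (x, s)) (t - s) := by
  intro u hu
  rw [fadd h]
  exact hc (s + u) ⟨by linarith [hu.1, hs.1], by linarith [hu.2]⟩

theorem conf_concat (h : IsFlow φ) (h1 : Conf φ U x t₁) (h2 : Conf φ U (φ (x, t₁)) t₂)
    (ht1 : 0 ≤ t₁) : Conf φ U x (t₁ + t₂) := by
  intro s hs
  by_cases hst : s ≤ t₁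
  · exact h1 s ⟨hs.1, hst⟩
  · have : φ (x, s) = φ (φ (x, t₁), s - t₁) := by rw [fadd h]; ring_nf
    rw [this]
    exact h2 (s - t₁) ⟨by linarith, by linarith [hs.2]⟩

theorem conf_iff_sigma (h : IsFlow φ) (ht : 0 ≤ t) :
    Conf φ U x t ↔ ∀ σ ∈ Icc (0:ℝ) 1, φ (x, σ * t) ∈ U := by
  constructor
  · intro hc σ hσ
    exact hc (σ * t) ⟨mul_nonneg hσ.1 ht, mul_le_of_le_one_left ht hσ.2⟩
  · intro hσ s hs
    rcases eq_or_lt_of_le ht with h0 | h0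
    · have hs0 : s = 0 := le_antisymm (hs.2.trans h0.symm.le) hs.1
      have := hσ 0 ⟨le_refl 0, zero_le_one⟩
      rwa [zero_mul, ← hs0] at this
    · have : (s / t) * t = s := div_mul_cancel₀ s (ne_of_gt h0)
      rw [← this]
      exact hσ (s / t) ⟨div_nonneg hs.1 h0.le, (div_le_one h0).2 hs.2⟩

theorem isClosed_conf (h : IsFlow φ) (hU : IsClosed U) (t : ℝ) :
    IsClosed {x | Conf φ U x t} := by
  have : {x | Conf φ U x t} = ⋂ s ∈ Icc (0:ℝ) t, (fun x => φ (x, s)) ⁻¹' U := by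
    ext x; simp [Conf, mem_iInter]
  rw [this]
  exact isClosed_biInter fun s _ => hU.preimage (fcont h s)

theorem isOpen_tube (h : IsFlow φ) (hV : IsOpen V) (T : ℝ) :
    IsOpen {x | ∀ s ∈ Icc (0:ℝ) T, φ (x, s) ∈ V} := by
  rw [isOpen_iff_forall_mem_open]
  intro x hx
  obtain ⟨u, v, hu, _, hxu, hIv, huv⟩ := generalized_tube_lemma (isCompact_singleton (x := x))
    (isCompact_Icc (a := (0:ℝ)) (b := T)) (hV.preimage h.1) (by
      rintro ⟨a, s⟩ ⟨ha, hs⟩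
      simp only [mem_singleton_iff] at ha
      subst ha
      exact hx s hs)
  exact ⟨u, fun y hy s hs => huv (mk_mem_prod hy (hIv hs)), hu, hxu rfl⟩

theorem isClosed_reach (h : IsFlow φ) (hU : IsClosed U) (hK : IsClosed K) (T : ℝ) :
    IsClosed {x | ∃ t ∈ Icc (0:ℝ) T, Conf φ U x t ∧ φ (x, t) ∈ K} := by
  haveI : CompactSpace (Icc (0:ℝ) T) := isCompact_iff_compactSpace.mp isCompact_Icc
  set C : Set (Icc (0:ℝ) T × Γ) :=
    {p | (∀ σ ∈ Icc (0:ℝ) 1, φ (p.2, σ * (p.1 : ℝ)) ∈ U) ∧ φ (p.2, (p.1 : ℝ)) ∈ K} with hC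
  have h1 : IsClosed {p : Icc (0:ℝ) T × Γ | ∀ σ ∈ Icc (0:ℝ) 1, φ (p.2, σ * (p.1 : ℝ)) ∈ U} := by
    have he : {p : Icc (0:ℝ) T × Γ | ∀ σ ∈ Icc (0:ℝ) 1, φ (p.2, σ * (p.1 : ℝ)) ∈ U}
        = ⋂ σ ∈ Icc (0:ℝ) 1, (fun p : Icc (0:ℝ) T × Γ => φ (p.2, σ * (p.1 : ℝ))) ⁻¹' U := by
      ext p; simp [mem_iInter]
    rw [he]
    exact isClosed_biInter fun σ _ => hU.preimage (h.1.comp (continuous_snd.prodMk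
      (continuous_const.mul (continuous_subtype_val.comp continuous_fst))))
  have h2 : IsClosed {p : Icc (0:ℝ) T × Γ | φ (p.2, (p.1 : ℝ)) ∈ K} :=
    hK.preimage (h.1.comp (continuous_snd.prodMk
      (continuous_subtype_val.comp continuous_fst)))
  have hCclosed : IsClosed C := h1.inter h2
  have himg : {x | ∃ t ∈ Icc (0:ℝ) T, Conf φ U x t ∧ φ (x, t) ∈ K} = Prod.snd '' C := by
    ext x
    constructor
    · rintro ⟨t, ht, hc, hk⟩
      exact ⟨(⟨t, ht⟩, x), ⟨(conf_iff_sigma h ht.1).1 hc, hk⟩, rfl⟩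
    · rintro ⟨⟨⟨t, ht⟩, y⟩, ⟨hσ, hk⟩, rfl⟩
      exact ⟨t, ht, (conf_iff_sigma h ht.1).2 hσ, hk⟩
  rw [himg]
  exact isClosedMap_snd_of_compactSpace C hCclosed

end FlowBasics

end IndexTripleAux
namespace IndexTripleAux

open Set Filter Topology

set_option linter.unusedSectionVars false
set_option linter.unusedVariables false

variable {Γ : Type*} [TopologicalSpace Γ]

section MaxInv

variable {φ : Γ × ℝ → Γ} {U V K : Set Γ}

theorem maxInv_subset : maxInv φ U ⊆ U := fun _ hx => hx.1

theorem maxInv_mono (hUV : U ⊆ V) : maxInv φ U ⊆ maxInv φ V :=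
  fun x hx => ⟨hUV hx.1, fun t => hUV (hx.2 t)⟩

theorem maxInv_smul (h : IsFlow φ) (hx : x ∈ maxInv φ U) (t : ℝ) : φ (x, t) ∈ maxInv φ U :=
  ⟨hx.2 t, fun s => by rw [fadd h]; exact hx.2 _⟩

theorem isClosed_maxInv (h : IsFlow φ) (hU : IsClosed U) : IsClosed (maxInv φ U) := by
  have : maxInv φ U = U ∩ ⋂ t : ℝ, (fun x => φ (x, t)) ⁻¹' U := by
    ext x; simp [maxInv, mem_iInter]
  rw [this]
  exact hU.inter (isClosed_iInter fun t => hU.preimage (fcont h t))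

theorem maxInv_rev : maxInv (rev φ) U = maxInv φ U := by
  ext x
  constructor
  · rintro ⟨hx, hall⟩
    exact ⟨hx, fun t => by have := hall (-t); rwa [rev_apply, neg_neg] at this⟩
  · rintro ⟨hx, hall⟩
    exact ⟨hx, fun t => hall (-t)⟩

end MaxInv

section OmegaLim

variable {φ : Γ × ℝ → Γ} {U K : Set Γ} {x z : Γ}

/-- the forward orbit of `x` from time `T` on -/
def fwdImg (φ : Γ × ℝ → Γ) (x : Γ) (T : ℝ) : Set Γ := (fun t => φ (x, t)) '' Ici T

/-- the genuine ω-limit set of a point -/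
def omegaLim (φ : Γ × ℝ → Γ) (x : Γ) : Set Γ := ⋂ n : ℕ, closure (fwdImg φ x n)

theorem fwdImg_mono {T T' : ℝ} (hT : T ≤ T') : fwdImg φ x T' ⊆ fwdImg φ x T :=
  image_mono (Ici_subset_Ici.2 hT)

theorem omegaLim_subset (n : ℕ) : omegaLim φ x ⊆ closure (fwdImg φ x n) :=
  iInter_subset _ n

theorem fwdImg_subset_of_conf (hc : ∀ t ≥ (0:ℝ), φ (x, t) ∈ U) {T : ℝ} (hT : 0 ≤ T) :
    fwdImg φ x T ⊆ U := by
  rintro y ⟨t, ht, rfl⟩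
  exact hc t (le_trans hT ht)

theorem omegaLim_nonempty (h : IsFlow φ) (hUc : IsCompact U) (hUcl : IsClosed U)
    (hc : ∀ t ≥ (0:ℝ), φ (x, t) ∈ U) : (omegaLim φ x).Nonempty := by
  apply IsCompact.nonempty_iInter_of_directed_nonempty_isCompact_isClosed
  · intro m n
    refine ⟨max m n, closure_mono (fwdImg_mono (by exact_mod_cast le_max_left m n)),
      closure_mono (fwdImg_mono (by exact_mod_cast le_max_right m n))⟩
  · intro n
    exact ⟨φ (x, n), subset_closure ⟨(n : ℝ), mem_Ici.2 le_rfl, rfl⟩⟩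
  · intro n
    exact hUc.of_isClosed_subset isClosed_closure
      ((closure_minimal (fwdImg_subset_of_conf hc (Nat.cast_nonneg n)) hUcl))
  · intro n; exact isClosed_closure

theorem omegaLim_smul (h : IsFlow φ) (hz : z ∈ omegaLim φ x) (t : ℝ) :
    φ (z, t) ∈ omegaLim φ x := by
  apply mem_iInter.2
  intro n
  obtain ⟨m, hm⟩ := exists_nat_ge ((n : ℝ) - t)
  have hzm : z ∈ closure (fwdImg φ x m) := omegaLim_subset m hz
  have himg : (fun y => φ (y, t)) '' fwdImg φ x m ⊆ fwdImg φ x n := by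
    rintro y ⟨w, ⟨u, hu, rfl⟩, rfl⟩
    exact ⟨u + t, by simp only [mem_Ici] at hu ⊢; linarith, (fadd h x u t).symm⟩
  have h1 : φ (z, t) ∈ (fun y => φ (y, t)) '' closure (fwdImg φ x m) := ⟨z, hzm, rfl⟩
  exact closure_mono himg (image_closure_subset_closure_image (fcont h t) h1)

theorem omegaLim_mem_maxInv (h : IsFlow φ) (hz : z ∈ omegaLim φ x) :
    z ∈ maxInv φ (closure (fwdImg φ x 0)) := by
  constructor
  · have := omegaLim_subset 0 hz; simpa using this
  · intro t
    have := omegaLim_subset 0 (omegaLim_smul h hz t); simpa using this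

theorem image_prod_singleton_Ici : φ '' ({x} ×ˢ Ici (0:ℝ)) = fwdImg φ x 0 := by
  ext y
  constructor
  · rintro ⟨⟨a, t⟩, ⟨ha, ht⟩, rfl⟩
    simp only [mem_singleton_iff] at ha; subst ha
    exact ⟨t, ht, rfl⟩
  · rintro ⟨t, ht, rfl⟩
    exact ⟨(x, t), ⟨rfl, ht⟩, rfl⟩

theorem image_prod_singleton_Iic : φ '' ({x} ×ˢ Iic (0:ℝ)) = fwdImg (rev φ) x 0 := by
  ext y
  constructor
  · rintro ⟨⟨a, t⟩, ⟨ha, ht⟩, rfl⟩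
    simp only [mem_singleton_iff] at ha; subst ha
    refine ⟨-t, by simpa using ht, ?_⟩
    show rev φ (a, -t) = φ (a, t)
    rw [rev_apply, neg_neg]
  · rintro ⟨t, ht, rfl⟩
    exact ⟨(x, -t), ⟨rfl, by simpa using ht⟩, rfl⟩

theorem omegaSet_singleton_eq : omegaSet φ {x} = maxInv φ (closure (fwdImg φ x 0)) := by
  unfold omegaSet
  rw [image_prod_singleton_Ici]

theorem omegaStarSet_singleton_eq :
    omegaStarSet φ {x} = maxInv φ (closure (fwdImg (rev φ) x 0)) := by
  unfold omegaStarSet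
  rw [image_prod_singleton_Iic]

end OmegaLim

section Crossing

variable {φ : Γ × ℝ → Γ} {U K : Set Γ}

theorem crossing_two_sided (h : IsFlow φ) (hUc : IsCompact U) (hUcl : IsClosed U)
    (hiso : maxInv φ U ⊆ interior K) :
    ∃ T : ℝ, 0 < T ∧ ∀ x : Γ, ¬ ∀ s ∈ Icc (-T) T, φ (x, s) ∈ U \ interior K := by
  by_contra hcon
  push_neg at hcon
  set E : ℕ → Set Γ := fun n => {y | ∀ s ∈ Icc (-((n:ℝ) + 1)) ((n:ℝ) + 1), φ (y, s) ∈ U \ interior K}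
    with hE
  have hEclosed : ∀ n, IsClosed (E n) := by
    intro n
    have : E n = ⋂ s ∈ Icc (-((n:ℝ) + 1)) ((n:ℝ) + 1), (fun y => φ (y, s)) ⁻¹' (U \ interior K) := by
      ext y; simp [hE, mem_iInter]
    rw [this]
    exact isClosed_biInter fun s _ => (hUcl.sdiff isOpen_interior).preimage (fcont h s)
  have hEsub : ∀ n, E n ⊆ U := by
    intro n y hy
    have hn0 : (0:ℝ) ≤ (n:ℝ) := Nat.cast_nonneg n
    have h0 : (0:ℝ) ∈ Icc (-((n:ℝ) + 1)) ((n:ℝ) + 1) := ⟨by linarith, by linarith⟩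
    have := hy 0 h0
    rw [fzero h] at this
    exact this.1
  have hEne : ∀ n, (E n).Nonempty := by
    intro n
    obtain ⟨x, hx⟩ := hcon ((n:ℝ) + 1) (by positivity)
    exact ⟨x, fun s hs => hx s hs⟩
  have hEdir : Directed (fun x1 x2 : Set Γ => x1 ⊇ x2) E := by
    intro m n
    refine ⟨max m n, fun y hy s hs => ?_, fun y hy s hs => ?_⟩ <;>
    · apply hy
      constructor <;>
      · simp only [mem_Icc] at hs
        have h1 : (m:ℝ) ≤ max m n := by exact_mod_cast le_max_left m n
        have h2 : (n:ℝ) ≤ max m n := by exact_mod_cast le_max_right m n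
        first
          | linarith [hs.1]
          | linarith [hs.2]
  have hne : (⋂ n, E n).Nonempty :=
    IsCompact.nonempty_iInter_of_directed_nonempty_isCompact_isClosed E hEdir hEne
      (fun n => hUc.of_isClosed_subset (hEclosed n) (hEsub n)) hEclosed
  obtain ⟨y, hy⟩ := hne
  have hyE : ∀ s : ℝ, φ (y, s) ∈ U \ interior K := by
    intro s
    obtain ⟨n, hn⟩ := exists_nat_ge |s|
    have hmem := (mem_iInter.1 hy) n
    apply hmem
    constructor
    · linarith [neg_abs_le s]
    · linarith [le_abs_self s]
  have hymem : y ∈ maxInv φ U := ⟨hEsub 0 ((mem_iInter.1 hy) 0), fun t => (hyE t).1⟩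
  have : y ∈ interior K := hiso hymem
  have h0 := hyE 0
  rw [fzero h] at h0
  exact h0.2 this

theorem crossing (h : IsFlow φ) (hUc : IsCompact U) (hUcl : IsClosed U)
    (hiso : maxInv φ U ⊆ interior K) :
    ∃ T : ℝ, 0 < T ∧
      (∀ x : Γ, Conf φ U x T → ∃ s ∈ Icc (0:ℝ) T, φ (x, s) ∈ interior K) ∧
      (∀ x : Γ, Conf (rev φ) U x T → ∃ s ∈ Icc (0:ℝ) T, φ (x, -s) ∈ interior K) := by
  obtain ⟨T₀, hT₀, hX⟩ := crossing_two_sided h hUc hUcl hiso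
  refine ⟨2 * T₀, by linarith, ?_, ?_⟩
  · intro x hc
    by_contra hno
    push_neg at hno
    apply hX (φ (x, T₀))
    intro s hs
    rw [fadd h]
    have h1 : T₀ + s ∈ Icc (0:ℝ) (2 * T₀) := by
      simp only [mem_Icc] at hs ⊢; constructor <;> linarith [hs.1, hs.2]
    exact ⟨hc _ h1, hno _ h1⟩
  · intro x hc
    by_contra hno
    push_neg at hno
    apply hX (φ (x, -T₀))
    intro s hs
    rw [fadd h]
    have h1 : T₀ - s ∈ Icc (0:ℝ) (2 * T₀) := by
      simp only [mem_Icc] at hs ⊢; constructor <;> linarith [hs.1, hs.2]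
    have heq : -T₀ + s = -(T₀ - s) := by ring
    rw [heq]
    refine ⟨?_, hno _ h1⟩
    have := hc (T₀ - s) h1
    rwa [rev_apply] at this

end Crossing

end IndexTripleAux
namespace IndexTripleAux

open Set Filter Topology

set_option linter.unusedSectionVars false
set_option linter.unusedVariables false

variable {Γ : Type*} [TopologicalSpace Γ]

section Push

variable {φ : Γ × ℝ → Γ} {U K : Set Γ} {x y : Γ} {t : ℝ}

/-- points reachable from `K` by a flow segment confined in `U` -/
def Push (φ : Γ × ℝ → Γ) (U K : Set Γ) : Set Γ :=
  {y | ∃ x ∈ K, ∃ t : ℝ, 0 ≤ t ∧ Conf φ U x t ∧ φ (x, t) = y}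

theorem subset_push (h : IsFlow φ) (hKU : K ⊆ U) : K ⊆ Push φ U K :=
  fun x hx => ⟨x, hx, 0, le_refl 0, conf_zero h (hKU hx), fzero h x⟩

theorem push_subset (h : IsFlow φ) (hKU : K ⊆ U) : Push φ U K ⊆ U := by
  rintro y ⟨x, hx, t, ht, hc, rfl⟩
  exact conf_end hc ht

theorem push_mono {K' : Set Γ} (hK : K ⊆ K') : Push φ U K ⊆ Push φ U K' := by
  rintro y ⟨x, hx, t, ht, hc, rfl⟩
  exact ⟨x, hK hx, t, ht, hc, rfl⟩

theorem push_inv (h : IsFlow φ) (hy : y ∈ Push φ U K) (ht : 0 ≤ t) (hc : Conf φ U y t) :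
    ∀ s ∈ Icc (0:ℝ) t, φ (y, s) ∈ Push φ U K := by
  rintro s hs
  obtain ⟨x, hx, t₀, ht₀, hc₀, rfl⟩ := hy
  refine ⟨x, hx, t₀ + s, by linarith [hs.1], ?_, by rw [← fadd h]⟩
  exact conf_concat h hc₀ (conf_prefix hc hs.2) ht₀

theorem mem_push_iff_rev (h : IsFlow φ) :
    y ∈ Push φ U K ↔ ∃ u : ℝ, 0 ≤ u ∧ Conf (rev φ) U y u ∧ rev φ (y, u) ∈ K := by
  constructor
  · rintro ⟨x, hx, t, ht, hc, rfl⟩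
    refine ⟨t, ht, ?_, ?_⟩
    · intro s hs
      rw [rev_apply, fadd h]
      exact hc (t + -s) ⟨by linarith [hs.2], by linarith [hs.1]⟩
    · rw [rev_apply, fadd h, add_neg_cancel, fzero h]
      exact hx
  · rintro ⟨u, hu, hc, hk⟩
    refine ⟨rev φ (y, u), hk, u, hu, ?_, ?_⟩
    · intro s hs
      rw [rev_apply, fadd h]
      have := hc (u - s) ⟨by linarith [hs.2], by linarith [hs.1]⟩
      rw [rev_apply] at this
      convert this using 2
      ring
    · rw [rev_apply, fadd h, neg_add_cancel, fzero h]

/-- A confined reach-set with bounded time; closed by `isClosed_reach`. -/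
theorem reach_time_bound (h : IsFlow φ) {T : ℝ}
    (hcr : ∀ x : Γ, Conf φ U x T → ∃ s ∈ Icc (0:ℝ) T, φ (x, s) ∈ interior K)
    (hKi : interior K ⊆ K) {p : Γ} {t : ℝ} (ht : 0 ≤ t) (hc : Conf φ U p t)
    (hk : φ (p, t) ∈ K) : ∃ s ∈ Icc (0:ℝ) T, Conf φ U p s ∧ φ (p, s) ∈ K := by
  by_cases hT : t ≤ T
  · exact ⟨t, ⟨ht, hT⟩, hc, hk⟩
  · obtain ⟨s, hs, hmem⟩ := hcr p (conf_prefix hc (le_of_not_ge hT))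
    exact ⟨s, hs, conf_prefix hc (hs.2.trans (le_of_not_ge hT)), hKi hmem⟩

theorem isClosed_push (h : IsFlow φ) (hUc : IsCompact U) (hUcl : IsClosed U)
    (hKcl : IsClosed K) (hKU : K ⊆ U) (hiso : maxInv φ U ⊆ interior K) :
    IsClosed (Push φ U K) := by
  obtain ⟨T, hT, hfwd, hbwd⟩ := crossing h hUc hUcl hiso
  set Q : Set Γ := {x | ∃ u ∈ Icc (0:ℝ) T, Conf (rev φ) U x u ∧ rev φ (x, u) ∈ K} with hQ
  set C : Set Γ := {x | ∀ u ∈ Icc (0:ℝ) T, rev φ (x, u) ∈ U \ interior K} with hCdef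
  have hQclosed : IsClosed Q := isClosed_reach (rev_isFlow h) hUcl hKcl T
  have hCclosed : IsClosed C := by
    have : C = ⋂ u ∈ Icc (0:ℝ) T, (fun x => rev φ (x, u)) ⁻¹' (U \ interior K) := by
      ext x; simp [hCdef, mem_iInter]
    rw [this]
    exact isClosed_biInter fun u _ => (hUcl.sdiff isOpen_interior).preimage (fcont (rev_isFlow h) u)
  have hsub : Push φ U K ⊆ Q ∪ C := by
    intro y hy
    obtain ⟨u₀, hu₀, hc, hk⟩ := (mem_push_iff_rev h).1 hy
    by_cases hcase : ∃ u ∈ Icc (0:ℝ) (min u₀ T), rev φ (y, u) ∈ interior K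
    · obtain ⟨u, hu, hmem⟩ := hcase
      exact Or.inl ⟨u, ⟨hu.1, hu.2.trans (min_le_right _ _)⟩,
        conf_prefix hc (hu.2.trans (min_le_left _ _)), interior_subset hmem⟩
    · push_neg at hcase
      by_cases hu₀T : u₀ ≤ T
      · exact Or.inl ⟨u₀, ⟨hu₀, hu₀T⟩, hc, hk⟩
      · refine Or.inr fun u hu => ⟨hc u ⟨hu.1, hu.2.trans (le_of_not_ge hu₀T)⟩, ?_⟩
        exact hcase u ⟨hu.1, le_min (hu.2.trans (le_of_not_ge hu₀T)) hu.2⟩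
  have hclosure : closure (Push φ U K) ⊆ Q ∪ C :=
    closure_minimal hsub (hQclosed.union hCclosed)
  apply isClosed_of_closure_subset
  intro x hx
  rcases hclosure hx with hxQ | hxC
  · obtain ⟨u, hu, hc, hk⟩ := hxQ
    exact (mem_push_iff_rev h).2 ⟨u, hu.1, hc, hk⟩
  · exfalso
    obtain ⟨s, hs, hmem⟩ := hbwd x (fun s hs => (hxC s hs).1)
    exact (hxC s hs).2 (by rwa [rev_apply])

end Push

end IndexTripleAux
namespace IndexTripleAux

open Set Filter Topology

set_option linter.unusedSectionVars false
set_option linter.unusedVariables false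

variable {Γ : Type*} [TopologicalSpace Γ]

section Ginv

variable (G : Type*) [Group G] [TopologicalSpace G] [MulAction G Γ] [ContinuousSMul G Γ]

/-- invariance of a set under the group action -/
def GInv (X : Set Γ) : Prop := ∀ g : G, ∀ x ∈ X, g • x ∈ X

variable {G}

theorem ginv_interior {U : Set Γ} (hU : GInv G U) : GInv G (interior U) := by
  intro g x hx
  apply mem_interior.2
  refine ⟨(fun y => g⁻¹ • y) ⁻¹' interior U, ?_, isOpen_interior.preimage (continuous_const_smul _), ?_⟩
  · intro y hy
    have : y = g • (g⁻¹ • y) := by rw [smul_inv_smul]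
    rw [this]
    exact hU g _ (interior_subset hy)
  · show g⁻¹ • (g • x) ∈ interior U
    rwa [inv_smul_smul]

theorem ginv_closure {U : Set Γ} (hU : GInv G U) : GInv G (closure U) := by
  intro g x hx
  have h1 : g • x ∈ (fun y => g • y) '' closure U := ⟨x, hx, rfl⟩
  have h2 := image_closure_subset_closure_image (continuous_const_smul g) (s := U) h1
  refine closure_mono ?_ h2
  rintro y ⟨z, hz, rfl⟩
  exact hU g z hz

theorem ginv_inter {U V : Set Γ} (hU : GInv G U) (hV : GInv G V) : GInv G (U ∩ V) :=
  fun g x hx => ⟨hU g x hx.1, hV g x hx.2⟩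

theorem ginv_union {U V : Set Γ} (hU : GInv G U) (hV : GInv G V) : GInv G (U ∪ V) := by
  rintro g x (hx | hx)
  · exact Or.inl (hU g x hx)
  · exact Or.inr (hV g x hx)

theorem ginv_diff {U V : Set Γ} (hU : GInv G U) (hV : GInv G V) : GInv G (U \ V) := by
  rintro g x ⟨hx1, hx2⟩
  refine ⟨hU g x hx1, fun hmem => hx2 ?_⟩
  have : x = g⁻¹ • (g • x) := by rw [inv_smul_smul]
  rw [this]
  exact hV g⁻¹ _ hmem

variable {φ : Γ × ℝ → Γ}

theorem ginv_push (h : IsFlow φ) (hequiv : ∀ (g : G) (x : Γ) (t : ℝ), φ (g • x, t) = g • φ (x, t))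
    {U K : Set Γ} (hU : GInv G U) (hK : GInv G K) : GInv G (Push φ U K) := by
  rintro g y ⟨x, hx, t, ht, hc, rfl⟩
  refine ⟨g • x, hK g x hx, t, ht, ?_, hequiv g x t⟩
  intro s hs
  rw [hequiv]
  exact hU g _ (hc s hs)

theorem ginv_confSet (h : IsFlow φ) (hequiv : ∀ (g : G) (x : Γ) (t : ℝ), φ (g • x, t) = g • φ (x, t))
    {V : Set Γ} (hV : GInv G V) (T : ℝ) : GInv G {x | ∀ s ∈ Icc (0:ℝ) T, φ (x, s) ∈ V} := by
  intro g x hx s hs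
  rw [hequiv]
  exact hV g _ (hx s hs)

variable [CompactSpace G] [LocallyCompactSpace Γ] [T2Space Γ]

theorem exists_ginv_compact_nbhd {S W : Set Γ} (hSc : IsCompact S) (hSinv : GInv G S)
    (hW : IsOpen W) (hSW : S ⊆ W) :
    ∃ K : Set Γ, IsCompact K ∧ GInv G K ∧ S ⊆ interior K ∧ K ⊆ W := by
  obtain ⟨K₀, hK₀c, hSK₀, hK₀W⟩ := exists_compact_between hSc hW hSW
  have hKsub : {x : Γ | ∀ g : G, g • x ∈ K₀} ⊆ K₀ := by
    intro x hx; have := hx 1; rwa [one_smul] at this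
  refine ⟨{x | ∀ g : G, g • x ∈ K₀}, ?_, ?_, ?_, fun z hz => hK₀W (hKsub hz)⟩
  · apply hK₀c.of_isClosed_subset _ hKsub
    have : {x : Γ | ∀ g : G, g • x ∈ K₀} = ⋂ g : G, (fun x => g • x) ⁻¹' K₀ := by
      ext x; simp
    rw [this]
    exact isClosed_iInter fun g => hK₀c.isClosed.preimage (continuous_const_smul g)
  · intro g x hx g'
    rw [smul_smul]; exact hx _
  · intro x hx
    have hsub : (univ : Set G) ×ˢ ({x} : Set Γ) ⊆ (fun p : G × Γ => p.1 • p.2) ⁻¹' interior K₀ := by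
      rintro ⟨g, y⟩ ⟨-, hy⟩
      simp only [mem_singleton_iff] at hy
      show g • y ∈ interior K₀
      rw [hy]
      exact hSK₀ (hSinv g x hx)
    obtain ⟨u, v, hu, hv, huu, hvv, huv⟩ := generalized_tube_lemma isCompact_univ
      isCompact_singleton (isOpen_interior.preimage continuous_smul) hsub
    apply mem_interior.2
    refine ⟨v, ?_, hv, hvv rfl⟩
    intro y hy g
    exact interior_subset (huv (mk_mem_prod (huu (mem_univ g)) hy))

end Ginv

end IndexTripleAux
namespace IndexTripleAux

open Set Filter Topology

set_option linter.unusedSectionVars false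
set_option linter.unusedVariables false
set_option maxHeartbeats 1000000

variable {Γ : Type*} [TopologicalSpace Γ]

section GoodK

variable {G : Type*} [Group G] [TopologicalSpace G] [MulAction G Γ] [ContinuousSMul G Γ]
variable [CompactSpace G] [LocallyCompactSpace Γ] [T2Space Γ]
variable {φ : Γ × ℝ → Γ} {U S : Set Γ}

theorem exists_good_K (h : IsFlow φ)
    (hUc : IsCompact U) (hUinv : GInv G U)
    (hiso : maxInv φ U = S) (hSU : S ⊆ interior U) (hSinv : GInv G S) (hSc : IsCompact S) :
    ∃ K : Set Γ, IsCompact K ∧ GInv G K ∧ S ⊆ interior K ∧ K ⊆ interior U ∧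
      ∀ p ∈ Push φ U K, p ∉ interior U → ∀ t : ℝ, 0 ≤ t → Conf φ U p t → φ (p, t) ∉ K := by
  have hUcl : IsClosed U := hUc.isClosed
  by_contra hcon
  push_neg at hcon
  set ι := {K : Set Γ // IsCompact K ∧ GInv G K ∧ S ⊆ interior K ∧ K ⊆ interior U} with hι
  obtain ⟨K₀, hc0, hg0, hi0, hw0⟩ :=
    exists_ginv_compact_nbhd (G := G) hSc hSinv isOpen_interior hSU
  haveI : Nonempty ι := ⟨⟨K₀, hc0, hg0, hi0, hw0⟩⟩
  have hdir : ∀ K₁ K₂ : ι, ∃ K₃ : ι, K₃.1 ⊆ K₁.1 ∧ K₃.1 ⊆ K₂.1 := by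
    intro K₁ K₂
    obtain ⟨K₃, hc3, hg3, hi3, hw3⟩ := exists_ginv_compact_nbhd (G := G) hSc hSinv
      (isOpen_interior.inter isOpen_interior : IsOpen (interior K₁.1 ∩ interior K₂.1))
      (subset_inter K₁.2.2.2.1 K₂.2.2.2.1)
    refine ⟨⟨K₃, hc3, hg3, hi3, fun x hx => K₁.2.2.2.2 (interior_subset (hw3 hx).1)⟩,
      fun x hx => interior_subset (hw3 hx).1, fun x hx => interior_subset (hw3 hx).2⟩
  -- any compact set meeting every K ∈ ι meets S
  have hmeetS : ∀ F : Set Γ, IsCompact F → (∀ K : ι, (F ∩ K.1).Nonempty) → (F ∩ S).Nonempty := by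
    intro F hF hne
    have hint : (⋂ K : ι, (F ∩ K.1)).Nonempty := by
      apply IsCompact.nonempty_iInter_of_directed_nonempty_isCompact_isClosed
      · intro K₁ K₂
        obtain ⟨K₃, h31, h32⟩ := hdir K₁ K₂
        exact ⟨K₃, inter_subset_inter_right F h31, inter_subset_inter_right F h32⟩
      · exact hne
      · exact fun K => hF.inter_right K.2.1.isClosed
      · exact fun K => hF.isClosed.inter K.2.1.isClosed
    obtain ⟨x, hx⟩ := hint
    have hxF : x ∈ F := (mem_iInter.1 hx ⟨K₀, hc0, hg0, hi0, hw0⟩).1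
    refine ⟨x, hxF, ?_⟩
    by_contra hxS
    have hScompl : S ⊆ interior U ∩ {x}ᶜ := by
      intro z hz
      refine ⟨hSU hz, ?_⟩
      simp only [mem_compl_iff, mem_singleton_iff]
      exact fun he => hxS (he ▸ hz)
    obtain ⟨K', hc', hg', hi', hw'⟩ := exists_ginv_compact_nbhd (G := G) hSc hSinv
      (isOpen_interior.inter isOpen_compl_singleton) hScompl
    have hxK' := (mem_iInter.1 hx ⟨K', hc', hg', hi', fun z hz => (hw' hz).1⟩).2
    have : x ∈ ({x}ᶜ : Set Γ) := (hw' hxK').2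
    simp at this
  -- crossing times
  have hcr : ∀ K : ι, ∃ T : ℝ, 0 < T ∧
      (∀ x, Conf φ U x T → ∃ s ∈ Icc (0:ℝ) T, φ (x, s) ∈ interior K.1) ∧
      (∀ x, Conf (rev φ) U x T → ∃ s ∈ Icc (0:ℝ) T, φ (x, -s) ∈ interior K.1) :=
    fun K => crossing h hUc hUcl (by rw [hiso]; exact K.2.2.2.1)
  choose T hT hfwd hbwd using hcr
  set B : ι → Set Γ := fun K => (Push φ U K.1 ∩ (interior U)ᶜ) ∩
    {p | ∃ s ∈ Icc (0:ℝ) (T K), Conf φ U p s ∧ φ (p, s) ∈ K.1} with hB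
  have hBclosed : ∀ K, IsClosed (B K) := by
    intro K
    refine ((isClosed_push h hUc hUcl K.2.1.isClosed (K.2.2.2.2.trans interior_subset)
      (by rw [hiso]; exact K.2.2.2.1)).inter (isClosed_compl_iff.2 isOpen_interior)).inter
      (isClosed_reach h hUcl K.2.1.isClosed (T K))
  have hBsubU : ∀ K, B K ⊆ U := fun K x hx =>
    push_subset h (K.2.2.2.2.trans interior_subset) hx.1.1
  have hBcompact : ∀ K, IsCompact (B K) := fun K => hUc.of_isClosed_subset (hBclosed K) (hBsubU K)
  have hBne : ∀ K, (B K).Nonempty := by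
    intro K
    obtain ⟨p, hp1, hp2, t, ht, hc, hk⟩ := hcon K.1 K.2.1 K.2.2.1 K.2.2.2.1 K.2.2.2.2
    obtain ⟨s, hs, hcs, hks⟩ := reach_time_bound h (hfwd K) interior_subset ht hc hk
    exact ⟨p, ⟨hp1, hp2⟩, s, hs, hcs, hks⟩
  have hBmono : ∀ K₁ K₂ : ι, K₁.1 ⊆ K₂.1 → B K₁ ⊆ B K₂ := by
    intro K₁ K₂ hsub x hx
    obtain ⟨⟨hpush, hint⟩, s, hs, hcs, hks⟩ := hx
    exact ⟨⟨push_mono hsub hpush, hint⟩,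
      reach_time_bound h (hfwd K₂) interior_subset hs.1 hcs (hsub hks)⟩
  have hBdir : Directed (fun a b : Set Γ => a ⊇ b) B := by
    intro K₁ K₂
    obtain ⟨K₃, h1, h2⟩ := hdir K₁ K₂
    exact ⟨K₃, hBmono K₃ K₁ h1, hBmono K₃ K₂ h2⟩
  obtain ⟨p, hp⟩ := IsCompact.nonempty_iInter_of_directed_nonempty_isCompact_isClosed B hBdir hBne
    hBcompact hBclosed
  have hpB : ∀ K : ι, p ∈ B K := mem_iInter.1 hp
  have hpU : p ∈ U := hBsubU _ (hpB ⟨K₀, hc0, hg0, hi0, hw0⟩)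
  have hpint : p ∉ interior U := (hpB ⟨K₀, hc0, hg0, hi0, hw0⟩).1.2
  have hpS : p ∉ S := fun hmem => hpint (hSU hmem)
  have hSflow : ∀ x ∈ S, ∀ t : ℝ, φ (x, t) ∈ S := by
    intro x hx t
    rw [← hiso] at hx ⊢
    exact maxInv_smul h hx t
  by_cases hfc : ∀ t : ℝ, 0 ≤ t → φ (p, t) ∈ U
  · by_cases hbc : ∀ t : ℝ, 0 ≤ t → φ (p, -t) ∈ U
    · apply hpS
      rw [← hiso]
      refine ⟨hpU, fun t => ?_⟩
      rcases le_or_gt 0 t with h0 | h0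
      · exact hfc t h0
      · have := hbc (-t) (by linarith)
        rwa [neg_neg] at this
    · push_neg at hbc
      obtain ⟨u₀, hu₀, hu₀mem⟩ := hbc
      set CC : Set ℝ := Icc (0:ℝ) u₀ ∩ {u | ∀ σ ∈ Icc (0:ℝ) 1, rev φ (p, σ * u) ∈ U} with hCC
      have hCCc : IsCompact CC := by
        apply isCompact_Icc.inter_right
        have : {u : ℝ | ∀ σ ∈ Icc (0:ℝ) 1, rev φ (p, σ * u) ∈ U}
            = ⋂ σ ∈ Icc (0:ℝ) 1, (fun u : ℝ => rev φ (p, σ * u)) ⁻¹' U := by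
          ext u; simp [mem_iInter]
        rw [this]
        refine isClosed_biInter fun σ _ => hUcl.preimage ?_
        exact (rev_isFlow h).1.comp (continuous_const.prodMk (continuous_const.mul continuous_id))
      have hcontmap : Continuous fun u : ℝ => rev φ (p, u) :=
        (rev_isFlow h).1.comp (continuous_const.prodMk continuous_id)
      have hF : IsCompact ((fun u : ℝ => rev φ (p, u)) '' CC) := hCCc.image hcontmap
      have hne : ∀ K : ι, (((fun u : ℝ => rev φ (p, u)) '' CC) ∩ K.1).Nonempty := by
        intro K
        obtain ⟨u, hu, hcu, hk⟩ := (mem_push_iff_rev h).1 (hpB K).1.1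
        have huu₀ : u ≤ u₀ := by
          by_contra hgt
          have := hcu u₀ ⟨hu₀, le_of_not_ge hgt⟩
          rw [rev_apply] at this
          exact hu₀mem this
        refine ⟨rev φ (p, u), ⟨u, ⟨⟨hu, huu₀⟩,
          (conf_iff_sigma (rev_isFlow h) hu).1 hcu⟩, rfl⟩, hk⟩
      obtain ⟨q, ⟨u, huCC, rfl⟩, hqS⟩ := hmeetS _ hF hne
      apply hpS
      have hpq : φ (rev φ (p, u), u) = p := by
        rw [rev_apply, fadd h, neg_add_cancel, fzero h]
      rw [← hpq]
      exact hSflow _ hqS u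
  · push_neg at hfc
    obtain ⟨t₀, ht₀, ht₀mem⟩ := hfc
    set CC : Set ℝ := Icc (0:ℝ) t₀ ∩ {u | ∀ σ ∈ Icc (0:ℝ) 1, φ (p, σ * u) ∈ U} with hCC
    have hCCc : IsCompact CC := by
      apply isCompact_Icc.inter_right
      have : {u : ℝ | ∀ σ ∈ Icc (0:ℝ) 1, φ (p, σ * u) ∈ U}
          = ⋂ σ ∈ Icc (0:ℝ) 1, (fun u : ℝ => φ (p, σ * u)) ⁻¹' U := by
        ext u; simp [mem_iInter]
      rw [this]
      refine isClosed_biInter fun σ _ => hUcl.preimage ?_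
      exact h.1.comp (continuous_const.prodMk (continuous_const.mul continuous_id))
    have hcontmap : Continuous fun u : ℝ => φ (p, u) :=
      h.1.comp (continuous_const.prodMk continuous_id)
    have hF : IsCompact ((fun u : ℝ => φ (p, u)) '' CC) := hCCc.image hcontmap
    have hne : ∀ K : ι, (((fun u : ℝ => φ (p, u)) '' CC) ∩ K.1).Nonempty := by
      intro K
      obtain ⟨s, hs, hcs, hks⟩ := (hpB K).2
      have hst₀ : s ≤ t₀ := by
        by_contra hgt
        exact ht₀mem (hcs t₀ ⟨ht₀, le_of_not_ge hgt⟩)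
      exact ⟨φ (p, s), ⟨s, ⟨⟨hs.1, hst₀⟩, (conf_iff_sigma h hs.1).1 hcs⟩, rfl⟩, hks⟩
    obtain ⟨q, ⟨u, huCC, rfl⟩, hqS⟩ := hmeetS _ hF hne
    apply hpS
    have hpq : φ (φ (p, u), -u) = p := by
      rw [fadd h, add_neg_cancel, fzero h]
    rw [← hpq]
    exact hSflow _ hqS (-u)

end GoodK

end IndexTripleAux
namespace IndexTripleAux

open Set Filter Topology

set_option linter.unusedSectionVars false
set_option linter.unusedVariables false
set_option maxHeartbeats 1000000

variable {Γ : Type*} [TopologicalSpace Γ]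

section BadSet

variable {φ : Γ × ℝ → Γ} {U S K : Set Γ}

/-- a helper: pushing a closure through a continuous map into a closed set -/
theorem closure_image_mem {f : Γ → Γ} (hf : Continuous f) {X C : Set Γ} (hC : IsClosed C)
    (hsub : ∀ x ∈ X, f x ∈ C) {z : Γ} (hz : z ∈ closure X) : f z ∈ C := by
  have h1 : f z ∈ f '' closure X := ⟨z, hz, rfl⟩
  have h2 := image_closure_subset_closure_image hf h1
  refine closure_minimal ?_ hC h2
  rintro w ⟨x, hx, rfl⟩
  exact hsub x hx

theorem isClosed_timeSet (h : IsFlow φ) (hK : IsClosed K) (y : Γ) :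
    IsClosed {t : ℝ | 0 ≤ t ∧ Conf φ K y t} := by
  have he : {t : ℝ | 0 ≤ t ∧ Conf φ K y t}
      = {t : ℝ | (0:ℝ) ≤ t} ∩ ⋂ σ ∈ Icc (0:ℝ) 1, (fun t : ℝ => φ (y, σ * t)) ⁻¹' K := by
    ext t
    simp only [mem_setOf_eq, mem_inter_iff, mem_iInter, mem_preimage]
    constructor
    · rintro ⟨ht, hc⟩
      exact ⟨ht, fun σ hσ => (conf_iff_sigma h ht).1 hc σ hσ⟩
    · rintro ⟨ht, hσ⟩
      exact ⟨ht, (conf_iff_sigma h ht).2 hσ⟩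
  rw [he]
  refine (isClosed_le continuous_const continuous_id).inter
    (isClosed_biInter fun σ _ => hK.preimage ?_)
  exact h.1.comp (continuous_const.prodMk (continuous_const.mul continuous_id))

/-- the set of points confined forward in `U` forever and whose forward orbit closure
avoids `A` -/
def Bad (φ : Γ × ℝ → Γ) (U A : Set Γ) : Set Γ :=
  {y | (∀ t : ℝ, 0 ≤ t → φ (y, t) ∈ U) ∧ closure (fwdImg φ y 0) ∩ A = ∅}

theorem ginv_bad {G : Type*} [Group G] [TopologicalSpace G] [MulAction G Γ] [ContinuousSMul G Γ]
    (h : IsFlow φ) (hequiv : ∀ (g : G) (x : Γ) (t : ℝ), φ (g • x, t) = g • φ (x, t))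
    {A : Set Γ} (hU : GInv G U) (hA : GInv G A) : GInv G (Bad φ U A) := by
  rintro g y ⟨hy1, hy2⟩
  constructor
  · intro t ht
    rw [hequiv]
    exact hU g _ (hy1 t ht)
  · apply eq_empty_of_subset_empty
    rintro w ⟨hw1, hw2⟩
    have hginv : g⁻¹ • w ∈ closure (fwdImg φ y 0) := by
      have himg : (fun x => g⁻¹ • x) '' (fwdImg φ (g • y) 0) ⊆ fwdImg φ y 0 := by
        rintro v ⟨x, ⟨t, ht, rfl⟩, rfl⟩
        refine ⟨t, ht, ?_⟩
        show φ (y, t) = g⁻¹ • φ (g • y, t)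
        rw [hequiv, inv_smul_smul]
      exact closure_image_mem (continuous_const_smul g⁻¹) isClosed_closure
        (fun x hx => subset_closure (himg ⟨x, hx, rfl⟩)) hw1
    have : g⁻¹ • w ∈ closure (fwdImg φ y 0) ∩ A := ⟨hginv, hA g⁻¹ w hw2⟩
    rw [hy2] at this
    exact this

theorem bad_avoid_A [T2Space Γ] (h : IsFlow φ) (hUc : IsCompact U) (hUcl : IsClosed U)
    (hiso : maxInv φ U = S) {K₀ A R : Set Γ}
    (hK₀c : IsCompact K₀) (hK₀U : K₀ ⊆ U) (hK₀R : K₀ ∩ R = ∅) (hAK₀ : A ⊆ interior K₀)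
    (hmemA : ∀ z ∈ S, omegaStarSet φ {z} ∩ R = ∅ → z ∈ A)
    (hAflow : ∀ x ∈ A, ∀ t : ℝ, φ (x, t) ∈ A) :
    A ∩ closure (Bad φ U A) = ∅ := by
  by_contra hne
  obtain ⟨a, haA, hacl⟩ := nonempty_iff_ne_empty.2 hne
  have hnotall : ∀ y ∈ Bad φ U A, ¬ ∀ t : ℝ, 0 ≤ t → φ (y, t) ∈ K₀ := by
    intro y hy hall
    have hsub : closure (fwdImg φ y 0) ⊆ K₀ := by
      apply closure_minimal _ hK₀c.isClosed
      rintro w ⟨t, ht, rfl⟩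
      exact hall t ht
    obtain ⟨q, hq⟩ := omegaLim_nonempty h hK₀c hK₀c.isClosed (fun t ht => hall t ht)
    have hq0 : q ∈ closure (fwdImg φ y 0) := by
      have := omegaLim_subset (φ := φ) 0 hq
      simpa using this
    have hqorb : ∀ t : ℝ, φ (q, t) ∈ K₀ := by
      intro t
      apply hsub
      have := omegaLim_subset (φ := φ) 0 (omegaLim_smul h hq t)
      simpa using this
    have hqS : q ∈ S := by
      rw [← hiso]
      exact ⟨hK₀U (hsub hq0), fun t => hK₀U (hqorb t)⟩
    have hqA : q ∈ A := by
      apply hmemA q hqS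
      apply eq_empty_of_subset_empty
      rw [omegaStarSet_singleton_eq, ← hK₀R]
      apply inter_subset_inter_left
      refine maxInv_subset.trans (closure_minimal ?_ hK₀c.isClosed)
      rintro w ⟨t, ht, rfl⟩
      exact hqorb _
    have : q ∈ closure (fwdImg φ y 0) ∩ A := ⟨hq0, hqA⟩
    rw [hy.2] at this
    exact this
  set O : ℕ → Set Γ := fun n => {x | ∀ s ∈ Icc (0:ℝ) (n:ℝ), φ (x, s) ∈ interior K₀} with hO
  have hOopen : ∀ n, IsOpen (O n) := fun n => isOpen_tube h isOpen_interior _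
  have haO : ∀ n, a ∈ O n := fun n s hs => hAK₀ (hAflow a haA s)
  have hBOne : ∀ n, (Bad φ U A ∩ O n).Nonempty := by
    intro n
    rcases mem_closure_iff.1 hacl (O n) (hOopen n) (haO n) with ⟨y, hyO, hyB⟩
    exact ⟨y, hyB, hyO⟩
  set TS : Γ → Set ℝ := fun y => {t | 0 ≤ t ∧ Conf φ K₀ y t} with hTS
  set eT : Γ → ℝ := fun y => sSup (TS y) with heT
  have hTSprop : ∀ n : ℕ, ∀ y ∈ Bad φ U A ∩ O n,
      BddAbove (TS y) ∧ (0 ≤ eT y ∧ Conf φ K₀ y (eT y)) ∧ (n:ℝ) ≤ eT y := by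
    intro n y hy
    have hn : (n:ℝ) ∈ TS y := ⟨Nat.cast_nonneg n, fun s hs => interior_subset (hy.2 s hs)⟩
    have hbdd : BddAbove (TS y) := by
      by_contra hnb
      apply hnotall y hy.1
      intro t ht
      obtain ⟨t', ht'mem, htt'⟩ := not_bddAbove_iff.1 hnb t
      exact conf_end (conf_prefix ht'mem.2 htt'.le) ht
    have hmem : eT y ∈ TS y := (isClosed_timeSet h hK₀c.isClosed y).csSup_mem ⟨_, hn⟩ hbdd
    exact ⟨hbdd, hmem, le_csSup hbdd hn⟩
  have hΨK₀ : ∀ n : ℕ, ∀ y ∈ Bad φ U A ∩ O n, φ (y, eT y) ∈ K₀ := by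
    intro n y hy
    obtain ⟨-, ⟨h1, h2⟩, -⟩ := hTSprop n y hy
    exact conf_end h2 h1
  have hΨout : ∀ n : ℕ, ∀ y ∈ Bad φ U A ∩ O n, φ (y, eT y) ∈ closure (K₀ᶜ) := by
    intro n y hy
    obtain ⟨hbdd, hmem, -⟩ := hTSprop n y hy
    rw [mem_closure_iff]
    intro W hW hWmem
    have hcont : ContinuousAt (fun u : ℝ => φ (y, u)) (eT y) :=
      (h.1.comp (continuous_const.prodMk continuous_id)).continuousAt
    have hpre : (fun u : ℝ => φ (y, u)) ⁻¹' W ∈ nhds (eT y) :=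
      hcont.preimage_mem_nhds (hW.mem_nhds hWmem)
    obtain ⟨ε, hε, hball⟩ := Metric.mem_nhds_iff.1 hpre
    have hexit : ∃ t', eT y < t' ∧ t' ≤ eT y + ε/2 ∧ φ (y, t') ∉ K₀ := by
      by_contra hno
      push_neg at hno
      have hmem2 : eT y + ε/2 ∈ TS y := by
        refine ⟨by linarith [hmem.1], fun s hs => ?_⟩
        rcases le_or_gt s (eT y) with hcase | hcase
        · exact hmem.2 s ⟨hs.1, hcase⟩
        · exact hno s hcase hs.2
      have := le_csSup hbdd hmem2
      linarith
    obtain ⟨t', ht'1, ht'2, ht'3⟩ := hexit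
    refine ⟨φ (y, t'), ?_, ht'3⟩
    apply hball
    simp only [Metric.mem_ball, Real.dist_eq]
    rw [abs_sub_lt_iff]
    constructor <;> linarith
  set Z : ℕ → Set Γ := fun n => closure ((fun y => φ (y, eT y)) '' (Bad φ U A ∩ O n)) with hZ
  have hZne : ∀ n, (Z n).Nonempty := by
    intro n
    obtain ⟨y, hy⟩ := hBOne n
    exact ⟨φ (y, eT y), subset_closure ⟨y, hy, rfl⟩⟩
  have hZsub : ∀ n, Z n ⊆ K₀ := by
    intro n
    apply closure_minimal _ hK₀c.isClosed
    rintro w ⟨y, hy, rfl⟩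
    exact hΨK₀ n y hy
  have hZcpt : ∀ n, IsCompact (Z n) := fun n =>
    hK₀c.of_isClosed_subset isClosed_closure (hZsub n)
  have hOanti : ∀ {m n : ℕ}, m ≤ n → O n ⊆ O m := by
    intro m n hmn x hx s hs
    exact hx s ⟨hs.1, hs.2.trans (by exact_mod_cast hmn)⟩
  have hZdir : Directed (fun a b : Set Γ => a ⊇ b) Z := by
    intro m n
    refine ⟨max m n, ?_, ?_⟩ <;>
      exact closure_mono (image_mono (inter_subset_inter_right _
        (hOanti (by simp [le_max_left, le_max_right]))))
  obtain ⟨z, hz⟩ := IsCompact.nonempty_iInter_of_directed_nonempty_isCompact_isClosed Z hZdir hZne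
    hZcpt (fun n => isClosed_closure)
  have hzZ : ∀ n : ℕ, z ∈ Z n := mem_iInter.1 hz
  have hza : ∀ u : ℝ, 0 ≤ u → φ (z, -u) ∈ K₀ := by
    intro u hu
    obtain ⟨n, hn⟩ := exists_nat_ge u
    refine closure_image_mem (fcont h (-u)) hK₀c.isClosed ?_ (hzZ n)
    rintro w ⟨y, hy, rfl⟩
    rw [fadd h]
    obtain ⟨-, ⟨he1, he2⟩, he3⟩ := hTSprop n y hy
    exact he2 (eT y + -u) ⟨by linarith, by linarith⟩
  have hzb : ∀ t : ℝ, 0 ≤ t → φ (z, t) ∈ U := by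
    intro t ht
    refine closure_image_mem (fcont h t) hUcl ?_ (hzZ 0)
    rintro w ⟨y, hy, rfl⟩
    rw [fadd h]
    obtain ⟨-, ⟨he1, he2⟩, -⟩ := hTSprop 0 y hy
    exact hy.1.1 (eT y + t) (by linarith)
  have hzc : z ∈ closure (K₀ᶜ) := by
    have : Z 0 ⊆ closure (K₀ᶜ) := by
      apply closure_minimal _ isClosed_closure
      rintro w ⟨y, hy, rfl⟩
      exact hΨout 0 y hy
    exact this (hzZ 0)
  have hzS : z ∈ S := by
    rw [← hiso]
    refine ⟨by have := hzb 0 le_rfl; rwa [fzero h] at this, fun t => ?_⟩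
    rcases le_or_gt 0 t with h0 | h0
    · exact hzb t h0
    · have := hza (-t) (by linarith)
      rw [neg_neg] at this
      exact hK₀U this
  have hzA : z ∈ A := by
    apply hmemA z hzS
    apply eq_empty_of_subset_empty
    rw [omegaStarSet_singleton_eq, ← hK₀R]
    apply inter_subset_inter_left
    refine maxInv_subset.trans (closure_minimal ?_ hK₀c.isClosed)
    rintro w ⟨t, ht, rfl⟩
    exact hza t ht
  rw [closure_compl] at hzc
  exact hzc (hAK₀ hzA)

end BadSet

end IndexTripleAux
namespace IndexTripleAux

open Set Filter Topology

set_option linter.unusedSectionVars false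
set_option linter.unusedVariables false
set_option maxHeartbeats 1000000

variable {Γ : Type*} [TopologicalSpace Γ]

section NineLemma

variable {φ : Γ × ℝ → Γ} {U : Set Γ}

theorem R_disjoint_closure_push [T2Space Γ] (h : IsFlow φ)
    (hUc : IsCompact U) (hUcl : IsClosed U) {KA A R : Set Γ}
    (hKAc : IsCompact KA) (hKAU : KA ⊆ U) (hKAR : KA ∩ R = ∅)
    (hKABad : KA ∩ Bad φ U A = ∅) (hAKA : A ⊆ interior KA)
    (hAflow : ∀ x ∈ A, ∀ t : ℝ, φ (x, t) ∈ A)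
    (hRflow : ∀ x ∈ R, ∀ t : ℝ, φ (x, t) ∈ R) :
    R ∩ closure (Push φ U KA) = ∅ := by
  by_contra hne
  obtain ⟨r, hrR, hrcl⟩ := nonempty_iff_ne_empty.2 hne
  have hstep1 : ∀ T' : ℝ,
      r ∉ {x | ∃ u ∈ Icc (0:ℝ) T', Conf (rev φ) U x u ∧ rev φ (x, u) ∈ KA} := by
    rintro T' ⟨u, hu, hcu, hk⟩
    have hmem : rev φ (r, u) ∈ R := by rw [rev_apply]; exact hRflow r hrR (-u)
    have : rev φ (r, u) ∈ KA ∩ R := ⟨hk, hmem⟩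
    rw [hKAR] at this
    exact this
  set SP : ℝ → Set Γ := fun T' =>
    {m | ∃ k ∈ KA, ∃ σ t : ℝ, 0 ≤ σ ∧ σ + T' ≤ t ∧ Conf φ U k t ∧
      (∀ s, σ < s → s ≤ t → φ (k, s) ∉ KA) ∧ φ (k, σ) ∈ KA ∧ φ (k, σ) = m} with hSPdef
  have hSPne : ∀ T' : ℝ, (SP T').Nonempty := by
    intro T'
    by_contra hempty
    rw [not_nonempty_iff_eq_empty] at hempty
    have hQc : IsClosed {x | ∃ u ∈ Icc (0:ℝ) T', Conf (rev φ) U x u ∧ rev φ (x, u) ∈ KA} :=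
      isClosed_reach (rev_isFlow h) hUcl hKAc.isClosed T'
    apply hstep1 T'
    rw [← hQc.closure_eq, mem_closure_iff]
    intro W' hW' hrW'
    obtain ⟨x, hxW, hxPush⟩ := mem_closure_iff.1 hrcl W' hW' hrW'
    obtain ⟨k, hk, t, ht, hc, rfl⟩ := hxPush
    set J := Icc (0:ℝ) t ∩ {s | φ (k, s) ∈ KA} with hJ
    have hJc : IsClosed J := isClosed_Icc.inter
      (hKAc.isClosed.preimage (h.1.comp (continuous_const.prodMk continuous_id)))
    have hJne : J.Nonempty := ⟨0, ⟨le_rfl, ht⟩, by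
      simp only [mem_setOf_eq, fzero h]; exact hk⟩
    have hJbdd : BddAbove J := BddAbove.mono inter_subset_left bddAbove_Icc
    set σ := sSup J with hσdef
    have hσJ : σ ∈ J := hJc.csSup_mem hJne hJbdd
    have havoid : ∀ s, σ < s → s ≤ t → φ (k, s) ∉ KA := by
      intro s hs1 hs2 hmem
      have hsJ : s ∈ J := ⟨⟨hσJ.1.1.trans hs1.le, hs2⟩, hmem⟩
      exact absurd (le_csSup hJbdd hsJ) (not_le.2 hs1)
    by_cases hgap : σ + T' ≤ t
    · have : φ (k, σ) ∈ SP T' := ⟨k, hk, σ, t, hσJ.1.1, hgap, hc, havoid, hσJ.2, rfl⟩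
      rw [hempty] at this
      exact absurd this (notMem_empty _)
    · refine ⟨φ (k, t), hxW, t - σ, ⟨by linarith [hσJ.1.2], by linarith⟩, ?_, ?_⟩
      · intro s hs
        rw [rev_apply, fadd h]
        exact hc (t + -s) ⟨by linarith [hs.2, hσJ.1.1], by linarith [hs.1]⟩
      · rw [rev_apply, fadd h]
        have heq : t + -(t - σ) = σ := by ring
        rw [heq]
        exact hσJ.2
  set Msets : ℕ → Set Γ := fun n => closure (SP ((n:ℝ) + 1)) with hMsets
  have hSPanti : ∀ {T₁ T₂ : ℝ}, T₁ ≤ T₂ → SP T₂ ⊆ SP T₁ := by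
    rintro T₁ T₂ hT m ⟨k, hk, σ, t, h1, h2, h3, h4, h5, h6⟩
    exact ⟨k, hk, σ, t, h1, by linarith, h3, h4, h5, h6⟩
  have hMne : ∀ n, (Msets n).Nonempty := fun n => (hSPne _).mono subset_closure
  have hMsub : ∀ n, Msets n ⊆ KA := by
    intro n
    apply closure_minimal _ hKAc.isClosed
    rintro m ⟨k, hk, σ, t, h1, h2, h3, h4, h5, rfl⟩
    exact h5
  have hMcpt : ∀ n, IsCompact (Msets n) := fun n =>
    hKAc.of_isClosed_subset isClosed_closure (hMsub n)
  have hMdir : Directed (fun a b : Set Γ => a ⊇ b) Msets := by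
    intro m n
    refine ⟨max m n, closure_mono (hSPanti ?_), closure_mono (hSPanti ?_)⟩ <;>
      simp [add_le_add_iff_right, Nat.cast_le, le_max_left, le_max_right]
  obtain ⟨m, hm⟩ := IsCompact.nonempty_iInter_of_directed_nonempty_isCompact_isClosed Msets hMdir
    hMne hMcpt (fun n => isClosed_closure)
  have hmM : ∀ n : ℕ, m ∈ Msets n := mem_iInter.1 hm
  have hmKA : m ∈ KA := hMsub 0 (hmM 0)
  have hstep4 : ∀ v : ℝ, 0 < v → φ (m, v) ∈ U ∩ (interior KA)ᶜ := by
    intro v hv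
    obtain ⟨n, hn⟩ := exists_nat_ge v
    refine closure_image_mem (fcont h v) (hUcl.inter (isClosed_compl_iff.2 isOpen_interior))
      ?_ (hmM n)
    rintro w ⟨k, hk, σ, t, h1, h2, h3, h4, h5, rfl⟩
    rw [fadd h]
    constructor
    · exact h3 (σ + v) ⟨by linarith, by linarith⟩
    · intro hmem
      exact h4 (σ + v) (by linarith) (by linarith) (interior_subset hmem)
  have hmBad : m ∈ Bad φ U A := by
    constructor
    · intro t ht
      rcases eq_or_lt_of_le ht with h0 | h0
      · rw [← h0, fzero h]
        exact hKAU hmKA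
      · exact (hstep4 t h0).1
    · have hmA : m ∉ A := by
        intro hmem
        have h1 := (hstep4 1 one_pos).2
        exact h1 (hAKA (hAflow m hmem 1))
      apply eq_empty_of_subset_empty
      rintro w ⟨hw1, hw2⟩
      have hCstar : closure (fwdImg φ m 0) ⊆ {m} ∪ (U ∩ (interior KA)ᶜ) := by
        apply closure_minimal _ (isClosed_singleton.union
          (hUcl.inter (isClosed_compl_iff.2 isOpen_interior)))
        rintro w' ⟨t, ht, rfl⟩
        rcases eq_or_lt_of_le (mem_Ici.1 ht) with h0 | h0
        · left
          have hb : (fun t => φ (m, t)) t = m := by rw [← h0]; exact fzero h m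
          rw [hb]
          rfl
        · right; exact hstep4 t h0
      rcases hCstar hw1 with hcase | hcase
      · rw [mem_singleton_iff] at hcase
        rw [hcase] at hw2
        exact hmA hw2
      · exact hcase.2 (hAKA hw2)
  have : m ∈ KA ∩ Bad φ U A := ⟨hmKA, hmBad⟩
  rw [hKABad] at this
  exact this

end NineLemma

end IndexTripleAux
open IndexTripleAux in
set_option maxHeartbeats 4000000 in
theorem exists_equivariant_index_triple
    {Γ : Type*} [TopologicalSpace Γ] [LocallyCompactSpace Γ] [T2Space Γ]
    {E : Type*} [NormedAddCommGroup E] [NormedSpace ℝ E]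
    {H : Type*} [TopologicalSpace H] (I : ModelWithCorners ℝ E H)
    {G : Type*} [TopologicalSpace G] [ChartedSpace H G] [Group G] [LieGroup I (⊤ : ℕ∞) G]
    [CompactSpace G] [MulAction G Γ] [ContinuousSMul G Γ]
    (φ : Γ × ℝ → Γ) (hφ : IsFlow φ)
    (hequiv : ∀ (g : G) (x : Γ) (t : ℝ), φ (g • x, t) = g • φ (x, t))
    (S : Set Γ) (hS : IsIsolatedInvariantSet φ S)
    (hSinv : ∀ (g : G), ∀ x ∈ S, g • x ∈ S)
    (A R : Set Γ) (hAR : IsAttractorRepellerPair φ S A R)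
    (hAinv : ∀ (g : G), ∀ x ∈ A, g • x ∈ A) (hRinv : ∀ (g : G), ∀ x ∈ R, g • x ∈ R) :
    ∃ L M N : Set Γ, N ⊆ M ∧ M ⊆ L ∧
      (∀ (g : G), ∀ x ∈ L, g • x ∈ L) ∧ (∀ (g : G), ∀ x ∈ M, g • x ∈ M) ∧
      (∀ (g : G), ∀ x ∈ N, g • x ∈ N) ∧
      IsIndexPair φ R L M ∧ IsIndexPair φ S L N ∧ IsIndexPair φ A M N := by
  classical
  obtain ⟨hScpt, U₀, hU₀cpt, hU₀nhd, hU₀iso⟩ := hS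
  obtain ⟨O₀, hO₀open, hSO₀, hO₀U₀⟩ := mem_nhdsSet_iff_exists.1 hU₀nhd
  have hSintU₀ : S ⊆ interior U₀ := by
    intro x hx
    have hxint : x ∈ interior O₀ := by rw [hO₀open.interior_eq]; exact hSO₀ hx
    exact interior_mono hO₀U₀ hxint
  -- S is invariant under the flow
  have hSflow : ∀ x ∈ S, ∀ t : ℝ, φ (x, t) ∈ S := by
    intro x hx t
    rw [← hU₀iso] at hx ⊢
    exact maxInv_smul hφ hx t
  -- a G-invariant compact isolating neighbourhood U of S
  obtain ⟨U, hUc, hUinv, hSU, hUU₀⟩ :=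
    exists_ginv_compact_nbhd (G := G) hScpt hSinv isOpen_interior hSintU₀
  have hUcl : IsClosed U := hUc.isClosed
  have hUiso : maxInv φ U = S := by
    apply Set.Subset.antisymm
    · intro x hx
      rw [← hU₀iso]
      exact maxInv_mono (hUU₀.trans interior_subset) hx
    · intro x hx
      exact ⟨interior_subset (hSU hx), fun t => interior_subset (hSU (hSflow x hx t))⟩
  -- attractor-repeller data
  obtain ⟨hAttr, hRep, hAcomp, hRcomp⟩ := hAR
  have hAS : A ⊆ S := hAttr.1
  have hRS : R ⊆ S := hRep.1
  obtain ⟨Ua, -, -, hUaA⟩ := hAttr.2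
  obtain ⟨Ur, -, -, hUrR⟩ := hRep.2
  have hAflow : ∀ x ∈ A, ∀ t : ℝ, φ (x, t) ∈ A := by
    intro x hx t
    rw [← hUaA] at hx ⊢
    exact maxInv_smul hφ hx t
  have hRflow : ∀ x ∈ R, ∀ t : ℝ, φ (x, t) ∈ R := by
    intro x hx t
    rw [← hUrR] at hx ⊢
    exact maxInv_smul hφ hx t
  have hAcl : IsClosed A := by
    rw [← hUaA]; exact isClosed_maxInv hφ isClosed_closure
  have hRcl : IsClosed R := by
    rw [← hUrR]; exact isClosed_maxInv hφ isClosed_closure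
  have hAcpt : IsCompact A := hScpt.of_isClosed_subset hAcl hAS
  have hRcpt : IsCompact R := hScpt.of_isClosed_subset hRcl hRS
  have hmemA : ∀ z ∈ S, omegaStarSet φ {z} ∩ R = ∅ → z ∈ A := by
    intro z hz h0
    rw [hAcomp]
    exact ⟨hz, h0⟩
  have hmemR : ∀ z ∈ S, omegaSet φ {z} ∩ A = ∅ → z ∈ R := by
    intro z hz h0
    rw [hRcomp]
    exact ⟨hz, h0⟩
  have hARdisj : A ∩ R = ∅ := by
    apply eq_empty_of_subset_empty
    rintro x ⟨hxA, hxR⟩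
    obtain ⟨q, hq⟩ := omegaLim_nonempty hφ hAcpt hAcl (fun t _ => hAflow x hxA t)
    have hq1 : q ∈ omegaSet φ {x} := by
      rw [omegaSet_singleton_eq]
      exact omegaLim_mem_maxInv hφ hq
    have hq2 : q ∈ A := by
      have h1 : q ∈ closure (fwdImg φ x 0) := by
        have := omegaLim_subset (φ := φ) 0 hq
        simpa using this
      refine closure_minimal ?_ hAcl h1
      rintro w ⟨t, ht, rfl⟩
      exact hAflow x hxA t
    have hxR' := hxR
    rw [hRcomp] at hxR'
    have : q ∈ omegaSet φ {x} ∩ A := ⟨hq1, hq2⟩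
    rw [hxR'.2] at this
    exact this
  -- the good neighbourhood K of S
  obtain ⟨K, hKc, hKinv, hSintK, hKintU, hKgood⟩ :=
    exists_good_K (G := G) hφ hUc hUinv hUiso hSU hSinv hScpt
  have hKU : K ⊆ U := hKintU.trans interior_subset
  -- the crossing time T
  obtain ⟨T, hT, hTfwd, -⟩ := crossing hφ hUc hUcl (by rw [hUiso]; exact hSintK)
  -- the sets L, D, N
  set L : Set Γ := Push φ U K with hLdef
  have hLcl : IsClosed L := isClosed_push hφ hUc hUcl hKc.isClosed hKU
    (by rw [hUiso]; exact hSintK)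
  have hLsubU : L ⊆ U := push_subset hφ hKU
  have hLcpt : IsCompact L := hUc.of_isClosed_subset hLcl hLsubU
  have hKL : K ⊆ L := subset_push hφ hKU
  have hLinv : GInv G L := ginv_push hφ hequiv hUinv hKinv
  set D : Set Γ := {x | ∀ s ∈ Icc (0:ℝ) T, φ (x, s) ∈ interior U} with hDdef
  have hDopen : IsOpen D := isOpen_tube hφ isOpen_interior T
  have hSD : S ⊆ D := fun x hx s _ => hSU (hSflow x hx s)
  have hDinv : GInv G D := ginv_confSet hφ hequiv (ginv_interior hUinv) T
  set N : Set Γ := L \ D with hNdef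
  have hNcl : IsClosed N := hLcl.sdiff hDopen
  have hNcpt : IsCompact N := hLcpt.of_isClosed_subset hNcl diff_subset
  have hNL : N ⊆ L := diff_subset
  have hNinv : GInv G N := ginv_diff hLinv hDinv
  have hSL : S ⊆ L := fun x hx => hKL (interior_subset (hSintK hx))
  -- key dynamical lemmas
  have KEY0 : ∀ x : Γ, ∀ t u : ℝ, 0 ≤ t → Conf φ U x t → 0 ≤ u → u ≤ t →
      φ (x, u) ∈ L → φ (x, u) ∉ interior U → φ (x, t) ∉ D := by
    intro x t u ht hc hu0 hut hpL hpnot hD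
    obtain ⟨v, hv, hvK⟩ := hTfwd (φ (x, t)) (fun w hw => interior_subset (hD w hw))
    have hconf : Conf φ U (φ (x, u)) (t + v - u) := by
      intro w hw
      rw [fadd hφ]
      rcases le_or_gt (u + w) t with hcase | hcase
      · exact hc (u + w) ⟨by linarith [hw.1], hcase⟩
      · have heq : φ (x, u + w) = φ (φ (x, t), u + w - t) := by
          rw [fadd hφ]; ring_nf
        rw [heq]
        refine interior_subset (hD (u + w - t) ⟨by linarith, ?_⟩)
        have : u + w ≤ t + v := by linarith [hw.2]
        linarith [hv.2]
    have hend : φ (φ (x, u), t + v - u) ∈ K := by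
      have heq : φ (φ (x, u), t + v - u) = φ (φ (x, t), v) := by
        rw [fadd hφ, fadd hφ]; ring_nf
      rw [heq]
      exact interior_subset hvK
    exact hKgood (φ (x, u)) hpL hpnot (t + v - u) (by linarith [hv.1]) hconf hend
  have KEY1 : ∀ x, x ∈ L → x ∉ D → ∀ t, 0 ≤ t → Conf φ U x t → φ (x, t) ∈ N := by
    intro x hxL hxD t ht hc
    have hφtL : φ (x, t) ∈ L := push_inv hφ hxL ht hc t ⟨ht, le_rfl⟩
    have hxD' : ¬ ∀ u ∈ Icc (0:ℝ) T, φ (x, u) ∈ interior U := hxD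
    push_neg at hxD'
    obtain ⟨u, hu, hunot⟩ := hxD'
    refine ⟨hφtL, ?_⟩
    rcases le_or_gt u t with hut | hut
    · exact KEY0 x t u ht hc hu.1 hut (push_inv hφ hxL ht hc u ⟨hu.1, hut⟩) hunot
    · intro hD'
      apply hunot
      have hmem := hD' (u - t) ⟨by linarith, by linarith [hu.2, ht]⟩
      rw [fadd hφ] at hmem
      have heq : t + (u - t) = u := by ring
      rwa [heq] at hmem
  have KEY2 : ∀ x, x ∈ L → ∀ t, 0 ≤ t → ¬ Conf φ U x t → ∃ s ∈ Icc (0:ℝ) t, φ (x, s) ∈ N := by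
    intro x hxL t ht hnc
    set J : Set ℝ := {s : ℝ | 0 ≤ s ∧ Conf φ U x s} ∩ Iic t with hJdef
    have hJcl : IsClosed J := (isClosed_timeSet hφ hUcl x).inter isClosed_Iic
    have hJne : J.Nonempty := ⟨0, ⟨le_rfl, conf_zero hφ (hLsubU hxL)⟩, ht⟩
    have hJbdd : BddAbove J := BddAbove.mono inter_subset_right bddAbove_Iic
    set s₁ := sSup J with hs₁def
    have hs₁J : s₁ ∈ J := hJcl.csSup_mem hJne hJbdd
    have hs₁t : s₁ < t := by
      rcases eq_or_lt_of_le (mem_Iic.1 hs₁J.2) with he | hl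
      · exact absurd (he ▸ hs₁J.1.2) hnc
      · exact hl
    have hyL : φ (x, s₁) ∈ L := push_inv hφ hxL hs₁J.1.1 hs₁J.1.2 s₁ ⟨hs₁J.1.1, le_rfl⟩
    have hyD : φ (x, s₁) ∉ D := by
      intro hyD
      set δ := min T (t - s₁) with hδdef
      have hδpos : 0 < δ := lt_min hT (by linarith)
      have hconcat : Conf φ U x (s₁ + δ) := by
        refine conf_concat hφ hs₁J.1.2 ?_ hs₁J.1.1
        intro w hw
        exact interior_subset (hyD w ⟨hw.1, hw.2.trans (min_le_left _ _)⟩)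
      have hmem : s₁ + δ ∈ J := ⟨⟨by linarith [hs₁J.1.1], hconcat⟩,
        by have := min_le_right T (t - s₁); simp only [mem_Iic]; linarith⟩
      have := le_csSup hJbdd hmem
      linarith
    exact ⟨s₁, ⟨hs₁J.1.1, mem_Iic.1 hs₁J.2⟩, hyL, hyD⟩
  -- the (v) axiom for the pair (L, N)
  have LNv : ∀ x ∈ N, ∀ t : ℝ, 0 ≤ t → (∀ s ∈ Icc (0:ℝ) t, φ (x, s) ∈ L) →
      ∀ s ∈ Icc (0:ℝ) t, φ (x, s) ∈ N := by
    intro x hx t ht hseg s hs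
    have hconf : Conf φ U x s := fun w hw => hLsubU (hseg w ⟨hw.1, hw.2.trans hs.2⟩)
    exact KEY1 x hx.1 hx.2 s hs.1 hconf
  -- the (vi) axiom
  have LNvi : ∀ x ∈ L, ∀ t : ℝ, 0 ≤ t → φ (x, t) ∉ L → ∃ s ∈ Icc (0:ℝ) t, φ (x, s) ∈ N := by
    intro x hx t ht hout
    refine KEY2 x hx t ht fun hc => hout ?_
    exact push_inv hφ hx ht hc t ⟨ht, le_rfl⟩
  -- the A-side compact neighbourhood KA
  have hARsub : A ⊆ interior U ∩ Rᶜ := by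
    intro x hx
    refine ⟨hSU (hAS hx), fun hmem => ?_⟩
    have : x ∈ A ∩ R := ⟨hx, hmem⟩
    rw [hARdisj] at this
    exact this
  obtain ⟨K₀, hK₀c, hAK₀, hK₀sub⟩ := exists_compact_between hAcpt
    (isOpen_interior.inter hRcl.isOpen_compl) hARsub
  have hK₀U : K₀ ⊆ U := fun x hx => interior_subset (hK₀sub hx).1
  have hK₀R : K₀ ∩ R = ∅ := by
    apply eq_empty_of_subset_empty
    rintro x ⟨hx1, hx2⟩
    exact (hK₀sub hx1).2 hx2
  have hBadA : A ∩ closure (Bad φ U A) = ∅ :=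
    bad_avoid_A hφ hUc hUcl hUiso hK₀c hK₀U hK₀R hAK₀ hmemA hAflow
  -- KA : G-invariant compact neighbourhood of A
  have hWA : A ⊆ interior K ∩ Rᶜ ∩ (closure (Bad φ U A))ᶜ := by
    intro x hx
    refine ⟨⟨hSintK (hAS hx), fun hmem => ?_⟩, fun hmem => ?_⟩
    · have : x ∈ A ∩ R := ⟨hx, hmem⟩
      rw [hARdisj] at this; exact this
    · have : x ∈ A ∩ closure (Bad φ U A) := ⟨hx, hmem⟩
      rw [hBadA] at this; exact this
  obtain ⟨KA, hKAc, hKAinv, hAintKA, hKAsub⟩ := exists_ginv_compact_nbhd (G := G) hAcpt hAinv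
    ((isOpen_interior.inter hRcl.isOpen_compl).inter (isClosed_closure.isOpen_compl)) hWA
  have hKAK : KA ⊆ K := fun x hx => interior_subset (hKAsub hx).1.1
  have hKAU : KA ⊆ U := hKAK.trans hKU
  have hKAR : KA ∩ R = ∅ := by
    apply eq_empty_of_subset_empty
    rintro x ⟨hx1, hx2⟩
    exact (hKAsub hx1).1.2 hx2
  have hKABad : KA ∩ Bad φ U A = ∅ := by
    apply eq_empty_of_subset_empty
    rintro x ⟨hx1, hx2⟩
    exact (hKAsub hx1).2 (subset_closure hx2)
  have hRP : R ∩ closure (Push φ U KA) = ∅ :=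
    R_disjoint_closure_push hφ hUc hUcl hKAc hKAU hKAR hKABad hAintKA hAflow hRflow
  -- the middle set M
  set PA : Set Γ := Push φ U KA with hPAdef
  set clP : Set Γ := closure PA with hclPdef
  have hPAL : PA ⊆ L := push_mono hKAK
  have hclPL : clP ⊆ L := closure_minimal hPAL hLcl
  have hclPinv : GInv G clP := ginv_closure (ginv_push hφ hequiv hUinv hKAinv)
  set M : Set Γ := N ∪ clP with hMdef
  have hMcl : IsClosed M := hNcl.union isClosed_closure
  have hML : M ⊆ L := union_subset hNL hclPL
  have hMcpt : IsCompact M := hLcpt.of_isClosed_subset hMcl hML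
  have hMinv : GInv G M := ginv_union hNinv hclPinv
  have hNM : N ⊆ M := subset_union_left
  have hKAPA : KA ⊆ PA := subset_push hφ hKAU
  have hAclP : A ⊆ clP := fun x hx => subset_closure (hKAPA (interior_subset (hAintKA hx)))
  have hAD : A ⊆ D := fun x hx => hSD (hAS hx)
  have hRD : R ⊆ D := fun x hx => hSD (hRS hx)
  have hAM : A ⊆ M := fun x hx => Or.inr (hAclP hx)
  have hAN : A ∩ N = ∅ := by
    apply eq_empty_of_subset_empty
    rintro x ⟨hx1, hx2⟩
    exact hx2.2 (hAD hx1)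
  have hRM : R ∩ M = ∅ := by
    apply eq_empty_of_subset_empty
    rintro x ⟨hx1, hx2 | hx2⟩
    · exact hx2.2 (hRD hx1)
    · have hmem : x ∈ R ∩ clP := ⟨hx1, hx2⟩
      rw [hRP] at hmem
      exact hmem
  have hRL : R ⊆ L := fun x hx => hSL (hRS hx)
  have KEYM : ∀ x ∈ M, ∀ t : ℝ, 0 ≤ t → Conf φ U x t →
      ∀ s ∈ Icc (0:ℝ) t, φ (x, s) ∈ M := by
    intro x hx t ht hc s hs
    have hcs : Conf φ U x s := conf_prefix hc hs.2
    rcases hx with hxN | hxP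
    · exact Or.inl (KEY1 x hxN.1 hxN.2 s hs.1 hcs)
    · by_cases hall : ∀ w ∈ Icc (0:ℝ) s, φ (x, w) ∈ interior U
      · right
        have hcl2 : x ∈ closure ({y | ∀ w ∈ Icc (0:ℝ) s, φ (y, w) ∈ interior U} ∩ PA) :=
          (isOpen_tube hφ isOpen_interior s).inter_closure ⟨hall, hxP⟩
        refine closure_image_mem (fcont hφ s) isClosed_closure ?_ hcl2
        rintro y ⟨hyO, hyP⟩
        exact subset_closure (push_inv hφ hyP hs.1
          (fun w hw => interior_subset (hyO w hw)) s ⟨hs.1, le_rfl⟩)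
      · push_neg at hall
        obtain ⟨u, hu, hunot⟩ := hall
        left
        have hxL : x ∈ L := hclPL hxP
        have hφsL : φ (x, s) ∈ L := push_inv hφ hxL hs.1 hcs s ⟨hs.1, le_rfl⟩
        refine ⟨hφsL, ?_⟩
        rcases eq_or_lt_of_le hu.2 with hus | hus
        · intro hD'
          apply hunot
          have hmem := hD' 0 ⟨le_rfl, hT.le⟩
          rw [fzero hφ] at hmem
          rw [hus]
          exact hmem
        · exact KEY0 x s u hs.1 hcs hu.1 hus.le (push_inv hφ hxL hs.1 hcs u hu) hunot
  have hLND : L \ N = L ∩ D := by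
    rw [hNdef, diff_diff_right, diff_self, empty_union]
  have hisoLN : IsIsolatingNbhd φ (closure (L \ N)) S := by
    refine ⟨hLcpt.of_isClosed_subset isClosed_closure (closure_minimal diff_subset hLcl), ?_, ?_⟩
    · apply mem_nhdsSet_iff_exists.2
      refine ⟨interior K ∩ D, isOpen_interior.inter hDopen,
        fun x hx => ⟨hSintK hx, hSD hx⟩, ?_⟩
      intro x hx
      apply subset_closure
      rw [hLND]
      exact ⟨hKL (interior_subset hx.1), hx.2⟩
    · apply Set.Subset.antisymm
      · intro z hz
        rw [← hUiso]
        have hsub : closure (L \ N) ⊆ U := closure_minimal (diff_subset.trans hLsubU) hUcl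
        exact ⟨hsub hz.1, fun t => hsub (hz.2 t)⟩
      · intro x hx
        have hxin : ∀ t : ℝ, φ (x, t) ∈ L \ N := by
          intro t
          rw [hLND]
          exact ⟨hSL (hSflow x hx t), hSD (hSflow x hx t)⟩
        have hx0 : x ∈ L \ N := by
          have := hxin 0
          rwa [fzero hφ] at this
        exact ⟨subset_closure hx0, fun t => subset_closure (hxin t)⟩
  have pairLN : IsIndexPair φ S L N := ⟨hLcpt, hNcpt, hNL, hisoLN, LNv, LNvi⟩
  have hLMsub : L \ M ⊆ KAᶜ := by
    rintro x ⟨hxL, hxM⟩ hmem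
    exact hxM (Or.inr (subset_closure (hKAPA hmem)))
  have hisoLM : IsIsolatingNbhd φ (closure (L \ M)) R := by
    refine ⟨hLcpt.of_isClosed_subset isClosed_closure (closure_minimal diff_subset hLcl), ?_, ?_⟩
    · obtain ⟨u, v, hu, hv, hRu, hMv, huv⟩ := SeparatedNhds.of_isCompact_isCompact hRcpt hMcpt
        (disjoint_iff_inter_eq_empty.2 hRM)
      apply mem_nhdsSet_iff_exists.2
      refine ⟨u ∩ (interior K ∩ D), hu.inter (isOpen_interior.inter hDopen),
        fun x hx => ⟨hRu hx, hSintK (hRS hx), hRD hx⟩, ?_⟩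
      intro x hx
      apply subset_closure
      refine ⟨hKL (interior_subset hx.2.1), fun hxM => ?_⟩
      exact (disjoint_left.1 huv) hx.1 (hMv hxM)
    · apply Set.Subset.antisymm
      · intro z hz
        have hsub : closure (L \ M) ⊆ U := closure_minimal (diff_subset.trans hLsubU) hUcl
        have hzS : z ∈ S := by
          rw [← hUiso]
          exact ⟨hsub hz.1, fun t => hsub (hz.2 t)⟩
        apply hmemR z hzS
        apply eq_empty_of_subset_empty
        rintro w ⟨hw1, hw2⟩
        have h1 : omegaSet φ {z} ⊆ closure (fwdImg φ z 0) := by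
          rw [omegaSet_singleton_eq]
          exact maxInv_subset
        have h2 : closure (fwdImg φ z 0) ⊆ closure (L \ M) := by
          apply closure_minimal _ isClosed_closure
          rintro w' ⟨tt, htt, rfl⟩
          exact hz.2 tt
        have h3 : closure (L \ M) ⊆ (interior KA)ᶜ := by
          rw [← closure_compl]
          exact closure_mono hLMsub
        exact (h3 (h2 (h1 hw1))) (hAintKA hw2)
      · intro x hx
        have hxin : ∀ t : ℝ, φ (x, t) ∈ L \ M := by
          intro t
          refine ⟨hRL (hRflow x hx t), fun hmem => ?_⟩
          have hbad : φ (x, t) ∈ R ∩ M := ⟨hRflow x hx t, hmem⟩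
          rw [hRM] at hbad
          exact hbad
        have hx0 : x ∈ L \ M := by
          have := hxin 0
          rwa [fzero hφ] at this
        exact ⟨subset_closure hx0, fun t => subset_closure (hxin t)⟩
  have pairLMv : ∀ x ∈ M, ∀ t : ℝ, 0 ≤ t → (∀ s ∈ Icc (0:ℝ) t, φ (x, s) ∈ L) →
      ∀ s ∈ Icc (0:ℝ) t, φ (x, s) ∈ M := by
    intro x hx t ht hseg s hs
    have hconf : Conf φ U x t := fun w hw => hLsubU (hseg w hw)
    exact KEYM x hx t ht hconf s hs
  have pairLMvi : ∀ x ∈ L, ∀ t : ℝ, 0 ≤ t → φ (x, t) ∉ L →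
      ∃ s ∈ Icc (0:ℝ) t, φ (x, s) ∈ M := by
    intro x hx t ht hout
    obtain ⟨s, hs, hsN⟩ := LNvi x hx t ht hout
    exact ⟨s, hs, hNM hsN⟩
  have pairLM : IsIndexPair φ R L M := ⟨hLcpt, hMcpt, hML, hisoLM, pairLMv, pairLMvi⟩
  have hMNsub : M \ N ⊆ clP := by
    rintro x ⟨hx1 | hx1, hx2⟩
    · exact absurd hx1 hx2
    · exact hx1
  have hisoMN : IsIsolatingNbhd φ (closure (M \ N)) A := by
    refine ⟨hMcpt.of_isClosed_subset isClosed_closure (closure_minimal diff_subset hMcl), ?_, ?_⟩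
    · apply mem_nhdsSet_iff_exists.2
      refine ⟨interior KA ∩ D, isOpen_interior.inter hDopen,
        fun x hx => ⟨hAintKA hx, hAD hx⟩, ?_⟩
      intro x hx
      apply subset_closure
      exact ⟨Or.inr (subset_closure (hKAPA (interior_subset hx.1))), fun hN => hN.2 hx.2⟩
    · apply Set.Subset.antisymm
      · intro z hz
        have hsubP : closure (M \ N) ⊆ clP := closure_minimal hMNsub isClosed_closure
        have hsubU : closure (M \ N) ⊆ U := hsubP.trans (hclPL.trans hLsubU)
        have hzS : z ∈ S := by
          rw [← hUiso]
          exact ⟨hsubU hz.1, fun t => hsubU (hz.2 t)⟩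
        apply hmemA z hzS
        apply eq_empty_of_subset_empty
        rintro w ⟨hw1, hw2⟩
        have h1 : omegaStarSet φ {z} ⊆ closure (fwdImg (rev φ) z 0) := by
          rw [omegaStarSet_singleton_eq]
          exact maxInv_subset
        have h2 : closure (fwdImg (rev φ) z 0) ⊆ clP := by
          apply closure_minimal _ isClosed_closure
          rintro w' ⟨tt, htt, rfl⟩
          exact hsubP (hz.2 (-tt))
        have hbad : w ∈ R ∩ clP := ⟨hw2, h2 (h1 hw1)⟩
        rw [hRP] at hbad
        exact hbad
      · intro x hx
        have hxin : ∀ t : ℝ, φ (x, t) ∈ M \ N := by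
          intro t
          refine ⟨hAM (hAflow x hx t), fun hmem => ?_⟩
          have hbad : φ (x, t) ∈ A ∩ N := ⟨hAflow x hx t, hmem⟩
          rw [hAN] at hbad
          exact hbad
        have hx0 : x ∈ M \ N := by
          have := hxin 0
          rwa [fzero hφ] at this
        exact ⟨subset_closure hx0, fun t => subset_closure (hxin t)⟩
  have pairMNv : ∀ x ∈ N, ∀ t : ℝ, 0 ≤ t → (∀ s ∈ Icc (0:ℝ) t, φ (x, s) ∈ M) →
      ∀ s ∈ Icc (0:ℝ) t, φ (x, s) ∈ N := by
    intro x hx t ht hseg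
    exact LNv x hx t ht (fun s hs => hML (hseg s hs))
  have pairMNvi : ∀ x ∈ M, ∀ t : ℝ, 0 ≤ t → φ (x, t) ∉ M →
      ∃ s ∈ Icc (0:ℝ) t, φ (x, s) ∈ N := by
    intro x hx t ht hout
    refine KEY2 x (hML hx) t ht fun hc => hout ?_
    exact KEYM x hx t ht hc t ⟨ht, le_rfl⟩
  have pairMN : IsIndexPair φ A M N := ⟨hMcpt, hNcpt, hNM, hisoMN, pairMNv, pairMNvi⟩
  exact ⟨L, M, N, hNM, hML, hLinv, hMinv, hNinv, pairLM, pairLN, pairMN⟩
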